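/- Let Q be a left quasigroup and N ≤ Aut(Q) (N a subgroup of the automorphism group of Q). Then LMlt(Q) normalizes N if and only if Dis_{O_N} ≤ N. In particular, for a rack Q, every normal subgroup of LMlt(Q) is admissible. -/

import Mathlib

/-- The left multiplication group of a left quasigroup. -/
def LMlt {Q : Type*} (L : Q → Equiv.Perm Q) : Subgroup (Equiv.Perm Q) :=
  Subgroup.closure (Set.range L)

/-- The relative displacement group Dis_r : the normal closure in LMlt(Q) of
{L_a L_b⁻¹ : r a b}. -/
def disRel {Q : Type*} (L : Q → Equiv.Perm Q) (r : Q → Q → Prop) :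
    Subgroup (Equiv.Perm Q) :=
  Subgroup.closure
    {x : Equiv.Perm Q | ∃ g ∈ LMlt L, ∃ a b : Q, r a b ∧ x = g * (L a * (L b)⁻¹) * g⁻¹}

/-- Conjugation of a left translation by an automorphism. -/
lemma conjL {Q : Type*} (mul : Q → Q → Q) (L : Q → Equiv.Perm Q)
    (hL : ∀ a b : Q, L a b = mul a b) {n : Equiv.Perm Q}
    (hn : ∀ a b : Q, n (mul a b) = mul (n a) (n b)) (b : Q) :
    n * L b * n⁻¹ = L (n b) := by
  ext x
  simp only [Equiv.Perm.mul_apply, hL]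
  rw [hn, Equiv.Perm.coe_inv, Equiv.apply_symm_apply]

/-- Forward direction, stated as a lemma so it can be reused for part 2. -/
lemma fwd_lemma {Q : Type*} (mul : Q → Q → Q) (L : Q → Equiv.Perm Q)
    (hL : ∀ a b : Q, L a b = mul a b) (N : Subgroup (Equiv.Perm Q))
    (hAut : ∀ n ∈ N, ∀ a b : Q, n (mul a b) = mul (n a) (n b))
    (hnorm : ∀ g ∈ LMlt L, ∀ n ∈ N, g * n * g⁻¹ ∈ N) :
    disRel L (fun a b => ∃ n ∈ N, n b = a) ≤ N := by
  rw [disRel]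
  apply (Subgroup.closure_le N).mpr
  rintro x ⟨g, hg, a, b, ⟨n, hn, hnb⟩, rfl⟩
  apply hnorm g hg
  have hLb : L b ∈ LMlt L := Subgroup.subset_closure ⟨b, rfl⟩
  have key : L a = n * L b * n⁻¹ := by
    rw [conjL mul L hL (hAut n hn) b, hnb]
  have h3 : L b * n⁻¹ * (L b)⁻¹ ∈ N := hnorm (L b) hLb n⁻¹ (inv_mem hn)
  have : L a * (L b)⁻¹ = n * (L b * n⁻¹ * (L b)⁻¹) := by rw [key]; group
  rw [this]
  exact mul_mem hn h3

theorem stmt_9 {Q : Type*} (mul ld : Q → Q → Q)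
    (h1 : ∀ x y, mul x (ld x y) = y) (h2 : ∀ x y, ld x (mul x y) = y)
    (L : Q → Equiv.Perm Q) (hL : ∀ a b : Q, L a b = mul a b)
    (N : Subgroup (Equiv.Perm Q))
    (hAut : ∀ n ∈ N, ∀ a b : Q, n (mul a b) = mul (n a) (n b)) :
    ((∀ g ∈ LMlt L, ∀ n ∈ N, g * n * g⁻¹ ∈ N) ↔
      disRel L (fun a b => ∃ n ∈ N, n b = a) ≤ N) ∧
    ((∀ x y z : Q, mul x (mul y z) = mul (mul x y) (mul x z)) →
      ∀ M : Subgroup (Equiv.Perm Q), M ≤ LMlt L →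
        (∀ g ∈ LMlt L, ∀ m ∈ M, g * m * g⁻¹ ∈ M) →
        disRel L (fun a b => ∃ m ∈ M, m b = a) ≤ M) := by
  constructor
  · constructor
    · exact fwd_lemma mul L hL N hAut
    · -- reverse direction
      intro hdis
      -- each L a is in the normalizer of N
      have claim1 : ∀ a : Q, ∀ n ∈ N, L a * n * (L a)⁻¹ ∈ N := by
        intro a n hn
        have hninv : ∀ x y : Q, (n⁻¹ : Equiv.Perm Q) (mul x y)
            = mul (n⁻¹ x) (n⁻¹ y) := hAut n⁻¹ (inv_mem hn)
        have hc : n⁻¹ * L a * n = L (n⁻¹ a) := by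
          have := conjL mul L hL hninv a
          simpa using this
        have key : L a * n = n * L (n⁻¹ a) := by
          rw [← hc]; group
        have hgen : L (n⁻¹ a) * (L a)⁻¹ ∈ disRel L (fun a b => ∃ n ∈ N, n b = a) := by
          apply Subgroup.subset_closure
          refine ⟨1, one_mem _, n⁻¹ a, a, ⟨n⁻¹, inv_mem hn, rfl⟩, by group⟩
        have : L a * n * (L a)⁻¹ = n * (L (n⁻¹ a) * (L a)⁻¹) := by
          rw [← mul_assoc, key]
        rw [this]
        exact mul_mem hn (hdis hgen)
      have claim2 : ∀ a : Q, ∀ n ∈ N, (L a)⁻¹ * n * L a ∈ N := by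
        intro a n hn
        have hc : n * L a * n⁻¹ = L (n a) := conjL mul L hL (hAut n hn) a
        have key : n * L a = L (n a) * n := by
          rw [← hc]; group
        have hgen : (L a)⁻¹ * L (n a) ∈ disRel L (fun a b => ∃ n ∈ N, n b = a) := by
          apply Subgroup.subset_closure
          have hLaInv : (L a)⁻¹ ∈ LMlt L := inv_mem (Subgroup.subset_closure ⟨a, rfl⟩)
          refine ⟨(L a)⁻¹, hLaInv, n a, a, ⟨n, hn, rfl⟩, by group⟩
        have : (L a)⁻¹ * n * L a = ((L a)⁻¹ * L (n a)) * n := by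
          rw [mul_assoc, key]; group
        rw [this]
        exact mul_mem (hdis hgen) hn
      have hnorm : LMlt L ≤ Subgroup.normalizer (N : Set (Equiv.Perm Q)) := by
        apply (Subgroup.closure_le _).mpr
        rintro x ⟨a, rfl⟩
        show L a ∈ Subgroup.normalizer (N : Set (Equiv.Perm Q))
        rw [Subgroup.mem_normalizer_iff]
        intro m
        constructor
        · exact claim1 a m
        · intro hm
          have := claim2 a _ hm
          simpa [mul_assoc] using this
      intro g hg n hn
      exact (Subgroup.mem_normalizer_iff.mp (hnorm hg) n).mp hn
  · intro hr M hM hMnorm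
    apply fwd_lemma mul L hL M _ hMnorm
    -- every element of M is an automorphism: M ≤ LMlt ≤ Aut
    intro m hm
    -- the subgroup of automorphisms
    let Aut : Subgroup (Equiv.Perm Q) :=
      { carrier := {g | ∀ a b : Q, g (mul a b) = mul (g a) (g b)}
        one_mem' := by intro a b; simp
        mul_mem' := by
          intro x y hx hy a b
          simp only [Equiv.Perm.mul_apply]
          rw [hy a b, hx (y a) (y b)]
        inv_mem' := by
          intro x hx a b
          have : x (x⁻¹ (mul a b)) = x (mul (x⁻¹ a) (x⁻¹ b)) := by
            rw [Equiv.Perm.coe_inv, Equiv.apply_symm_apply, hx, Equiv.apply_symm_apply,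
              Equiv.apply_symm_apply]
          exact x.injective this }
    have hsub : LMlt L ≤ Aut := by
      apply (Subgroup.closure_le _).mpr
      rintro x ⟨a, rfl⟩ y z
      simp only [hL]
      exact hr a y z
    exact hsub (hM hm)
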